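/- Let D be an essential integral domain with quotient field K, i.e., there is a set Δ of prime ideals of D such that D = ⋂{D_P : P ∈ Δ} and D_P is a valuation domain for each P ∈ Δ. Then (c_D(fg))^{⋆_Δ} = (c_D(f)·c_D(g))^{⋆_Δ} for all nonzero f, g ∈ K[X], where E^{⋆_Δ} := ⋂{E D_P : P ∈ Δ}. However, if D is neither a Prüfer domain nor quasilocal, then there exist two nonzero nonunits x, y ∈ D with D = D_x ∩ D_y such that, setting E^⋆ := E D_x ∩ E D_y for nonzero D-submodules E of K, one has (c_D(fg))^⋆ ≠ (c_D(f)·c_D(g))^⋆ for some nonzero f, g ∈ K[X]; in particular D is not a P⋆MD for this stable (semi)star operation ⋆ of finite type. -/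

import Mathlib

open Polynomial

noncomputable section

/-- The content of a polynomial `h ∈ K[X]` with respect to `D`: the `D`-submodule of `K`
generated by the coefficients of `h`. -/
def polyContent (D K : Type*) [CommRing D] [Field K] [Algebra D K] (h : K[X]) :
    Submodule D K :=
  Submodule.span D (Set.range h.coeff)

/-- The set `E D_P = {x ∈ K : s • x ∈ E for some s ∈ D ∖ P}`. -/
def primeLocSet (D K : Type*) [CommRing D] [Field K] [Algebra D K]
    (P : Ideal D) (E : Submodule D K) : Set K :=
  {x : K | ∃ s : D, s ∉ P ∧ s • x ∈ E}

/-- The set `E D_x = {z ∈ K : x^k • z ∈ E for some k ≥ 0}`, where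
`D_x` is the ring of fractions of `D` with respect to `{x^k : k ≥ 0}`. -/
def elemLocSet (D K : Type*) [CommRing D] [Field K] [Algebra D K]
    (x : D) (E : Submodule D K) : Set K :=
  {z : K | ∃ k : ℕ, x ^ k • z ∈ E}


section Gen
variable {R K : Type*} [CommRing R] [Field K] [Algebra R K]

lemma one_mul_mem {u v : K} (hu : u ∈ (1 : Submodule R K)) (hv : v ∈ (1 : Submodule R K)) :
    u * v ∈ (1 : Submodule R K) := by
  rw [Submodule.mem_one] at *
  obtain ⟨a, rfl⟩ := hu; obtain ⟨b, rfl⟩ := hv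
  exact ⟨a * b, by rw [map_mul]⟩

lemma mulinv_le_one (W : Submodule R K) : W * (1 / W) ≤ 1 := by
  rw [Submodule.mul_le]
  intro m hm n hn
  rw [mul_comm]
  exact Submodule.mem_div_iff_forall_mul_mem.mp hn m hm

lemma eq_one_of_one_mem {S : Submodule R K} (h1 : S ≤ 1) (h2 : (1 : K) ∈ S) : S = 1 := by
  refine le_antisymm h1 ?_
  rw [Submodule.one_le] at *
  exact h2
end Gen

section Gauss
variable {R K : Type*} [CommRing R] [Field K] [Algebra R K]
variable (hG : ∀ f g : K[X], f ≠ 0 → g ≠ 0 →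
  polyContent R K f * polyContent R K g ≤ polyContent R K (f * g))

include hG in
lemma mem_one_of_integral (p : K[X]) (hp : p.Monic)
    (hco : ∀ i, p.coeff i ∈ (1 : Submodule R K)) (u : K) (hu : p.eval u = 0) :
    u ∈ (1 : Submodule R K) := by
  obtain ⟨h, hh⟩ := (dvd_iff_isRoot (p := p)).mpr hu
  have hhm : h.Monic := by
    have := hp
    rw [hh] at this
    exact (monic_X_sub_C u).of_mul_monic_left this
  have h1 : (-u) ∈ polyContent R K (X - C u) :=
    Submodule.subset_span ⟨0, by simp⟩
  have h2 : (1 : K) ∈ polyContent R K h :=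
    Submodule.subset_span ⟨h.natDegree, hhm⟩
  have h3 : polyContent R K p ≤ 1 := by
    rw [polyContent, Submodule.span_le]
    rintro z ⟨i, rfl⟩
    exact hco i
  have h4 : (-u) * 1 ∈ polyContent R K (X - C u) * polyContent R K h :=
    Submodule.mul_mem_mul h1 h2
  have h5 := hG (X - C u) h (X_sub_C_ne_zero u) hhm.ne_zero
  rw [← hh] at h5
  have : (-u) ∈ (1 : Submodule R K) := by simpa using h3 (h5 h4)
  simpa using neg_mem this

lemma inv_principal (c : K) (hc : c ≠ 0) :
    Submodule.span R {c} * (1 / Submodule.span R {c}) = 1 := by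
  refine eq_one_of_one_mem (mulinv_le_one _) ?_
  have h1 : c⁻¹ ∈ (1 : Submodule R K) / Submodule.span R {c} := by
    rw [Submodule.mem_div_iff_forall_mul_mem]
    intro yc hyc
    rw [Submodule.mem_span_singleton] at hyc
    obtain ⟨d, rfl⟩ := hyc
    have : c⁻¹ * (d • c) = d • (1 : K) := by
      rw [mul_smul_comm, inv_mul_cancel₀ hc]
    rw [this]
    exact Submodule.smul_mem _ d (Submodule.one_le.mp le_rfl)
  have := Submodule.mul_mem_mul (Submodule.mem_span_singleton_self c) h1
  rwa [mul_inv_cancel₀ hc] at this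

include hG in
set_option maxHeartbeats 2000000 in
lemma two_gen (a b : K) (hab : ¬(a = 0 ∧ b = 0)) :
    Submodule.span R {a, b} * (1 / Submodule.span R {a, b}) = 1 := by
  by_cases ha : a = 0
  · subst ha
    rw [show ({(0 : K), b} : Set K) = insert 0 {b} from rfl, Submodule.span_insert_zero]
    have hb : b ≠ 0 := fun hb => hab ⟨rfl, hb⟩
    exact inv_principal b hb
  by_cases hb : b = 0
  · subst hb
    rw [Set.pair_comm, show ({(0 : K), a} : Set K) = insert 0 {a} from rfl,
      Submodule.span_insert_zero]
    exact inv_principal a ha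
  set α := algebraMap R K with hα
  set W := Submodule.span R {a, b} with hW
  have haW : a ∈ W := Submodule.subset_span (Set.mem_insert a {b})
  have hbW : b ∈ W := Submodule.subset_span (Set.mem_insert_of_mem a rfl)
  set f : K[X] := C a * X + C b with hf
  set g : K[X] := C a * X - C b with hg
  have hfc1 : f.coeff 1 = a := by simp [hf]
  have hgc1 : g.coeff 1 = a := by simp [hg]
  have hgc0 : g.coeff 0 = -b := by simp [hg]
  have hf0 : f ≠ 0 := fun h0 => ha (by rw [h0] at hfc1; simpa using hfc1.symm)
  have hg0 : g ≠ 0 := fun h0 => ha (by rw [h0] at hgc1; simpa using hgc1.symm)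
  have hfg : f * g = C a * C a * X ^ 2 - C b * C b := by rw [hf, hg]; ring
  have hab1 : a * (-b) ∈ polyContent R K (f * g) :=
    hG f g hf0 hg0 (Submodule.mul_mem_mul (Submodule.subset_span ⟨1, hfc1⟩)
      (Submodule.subset_span ⟨0, hgc0⟩))
  have hle : polyContent R K (f * g) ≤ Submodule.span R {a * a, b * b} := by
    rw [polyContent, Submodule.span_le]
    rintro z ⟨n, rfl⟩
    rw [hfg]
    rcases n with _ | _ | _ | n
    · have h : (C a * C a * X ^ 2 - C b * C b : K[X]).coeff 0 = -(b * b) := by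
        simp [mul_assoc, coeff_C_mul, coeff_X_pow]
      rw [h]
      exact neg_mem (Submodule.subset_span (Set.mem_insert_of_mem _ rfl))
    · have h : (C a * C a * X ^ 2 - C b * C b : K[X]).coeff 1 = 0 := by
        simp [mul_assoc, coeff_C_mul, coeff_X_pow]
      rw [h]; exact zero_mem _
    · have h : (C a * C a * X ^ 2 - C b * C b : K[X]).coeff 2 = a * a := by
        simp [mul_assoc, coeff_C_mul, coeff_X_pow]
      rw [h]
      exact Submodule.subset_span (Set.mem_insert _ _)
    · have h : (C a * C a * X ^ 2 - C b * C b : K[X]).coeff (n + 3) = 0 := by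
        simp [mul_assoc, coeff_C_mul, coeff_X_pow]
      rw [h]; exact zero_mem _
  have hab2 : a * b ∈ Submodule.span R {a * a, b * b} := by
    have := neg_mem (hle hab1)
    simpa using this
  obtain ⟨r, s, hrs⟩ := Submodule.mem_span_pair.mp hab2
  rw [Algebra.smul_def, Algebra.smul_def, ← hα] at hrs
  set t : K := α r * a * b⁻¹ with ht
  have ht2 : t ^ 2 = t - α r * α s := by
    rw [ht]
    field_simp
    linear_combination (α r) * hrs
  set p : K[X] := X ^ 2 - X + C (α r * α s) with hp
  have hpm : p.Monic := by
    have h2 : p = X ^ (1 + 1) - (X - C (α r * α s)) := by rw [hp]; ring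
    rw [h2]
    exact monic_X_pow_sub (by rw [degree_X_sub_C]; norm_num)
  have hpc : ∀ i, p.coeff i ∈ (1 : Submodule R K) := by
    intro i
    rw [hp]
    rcases i with _ | _ | _ | i
    · have h : (X ^ 2 - X + C (α r * α s) : K[X]).coeff 0 = α r * α s := by
        simp [coeff_X_pow]
      rw [h, ← map_mul]
      exact Submodule.mem_one.mpr ⟨r * s, rfl⟩
    · have h : (X ^ 2 - X + C (α r * α s) : K[X]).coeff 1 = -1 := by
        simp [coeff_X_pow, coeff_X]
      rw [h]
      exact neg_mem (Submodule.one_le.mp le_rfl)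
    · have h : (X ^ 2 - X + C (α r * α s) : K[X]).coeff 2 = 1 := by
        simp [coeff_X_pow, coeff_X]
      rw [h]
      exact Submodule.one_le.mp le_rfl
    · have h : (X ^ 2 - X + C (α r * α s) : K[X]).coeff (i + 3) = 0 := by
        simp [coeff_X_pow, coeff_X]
      rw [h]; exact zero_mem _
  have hpe : p.eval t = 0 := by
    rw [hp]
    simp only [eval_add, eval_sub, eval_pow, eval_X, eval_C]
    rw [ht2]; ring
  have htone : t ∈ (1 : Submodule R K) := mem_one_of_integral hG p hpm hpc t hpe
  set z₁ : K := t * a⁻¹ with hz₁d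
  set z₂ : K := (1 - t) * b⁻¹ with hz₂d
  have hz₁ : z₁ ∈ (1 : Submodule R K) / W := by
    rw [Submodule.mem_div_iff_forall_mul_mem]
    intro m hm
    refine Submodule.span_induction ?_ ?_ ?_ ?_ hm
    · rintro w (rfl | rfl)
      · have : z₁ * w = t := by rw [hz₁d]; field_simp
        rw [this]; exact htone
      · have : z₁ * w = α r := by rw [hz₁d, ht]; field_simp
        rw [this]; exact Submodule.mem_one.mpr ⟨r, rfl⟩
    · rw [mul_zero]; exact zero_mem _
    · intro m n _ _ h1 h2; rw [mul_add]; exact add_mem h1 h2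
    · intro d m _ h1; rw [mul_smul_comm]; exact Submodule.smul_mem _ d h1
  have hz₂ : z₂ ∈ (1 : Submodule R K) / W := by
    rw [Submodule.mem_div_iff_forall_mul_mem]
    intro m hm
    refine Submodule.span_induction ?_ ?_ ?_ ?_ hm
    · rintro w (rfl | rfl)
      · have : z₂ * w = α s := by
          rw [hz₂d, ht]
          field_simp
          linear_combination -hrs
        rw [this]; exact Submodule.mem_one.mpr ⟨s, rfl⟩
      · have : z₂ * w = 1 - t := by rw [hz₂d]; field_simp
        rw [this]; exact sub_mem (Submodule.one_le.mp le_rfl) htone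
    · rw [mul_zero]; exact zero_mem _
    · intro m n _ _ h1 h2; rw [mul_add]; exact add_mem h1 h2
    · intro d m _ h1; rw [mul_smul_comm]; exact Submodule.smul_mem _ d h1
  refine eq_one_of_one_mem (mulinv_le_one _) ?_
  have e1 : a * z₁ = t := by rw [hz₁d]; field_simp [mul_comm]
  have e2 : b * z₂ = 1 - t := by rw [hz₂d]; field_simp [mul_comm]
  have : a * z₁ + b * z₂ = 1 := by rw [e1, e2]; ring
  rw [← this]
  exact add_mem (Submodule.mul_mem_mul haW hz₁) (Submodule.mul_mem_mul hbW hz₂)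


section InvGen
variable {R K : Type*} [CommRing R] [Field K] [Algebra R K]

lemma mulinv_le_one' (W : Submodule R K) : W * (1 / W) ≤ 1 := by
  rw [Submodule.mul_le]
  intro m hm n hn
  rw [mul_comm]
  exact Submodule.mem_div_iff_forall_mul_mem.mp hn m hm

lemma inv_factor (U V : Submodule R K) (h : (U * V) * (1 / (U * V)) = 1) :
    U * (1 / U) = 1 := by
  have hXle : V * (1 / (U * V)) ≤ 1 / U := by
    rw [Submodule.le_div_iff_mul_le]
    calc V * (1 / (U * V)) * U = (U * V) * (1 / (U * V)) := by ring
    _ ≤ 1 := h.le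
  refine le_antisymm (mulinv_le_one' U) ?_
  calc (1 : Submodule R K) = (U * V) * (1 / (U * V)) := h.symm
  _ = U * (V * (1 / (U * V))) := by ring
  _ ≤ U * (1 / U) := mul_le_mul_right hXle _

lemma inv_mul_inv (U V : Submodule R K) (hU : U * (1 / U) = 1) (hV : V * (1 / V) = 1) :
    (U * V) * (1 / (U * V)) = 1 := by
  refine le_antisymm (mulinv_le_one' _) ?_
  have h1 : (1 / U) * (1 / V) ≤ 1 / (U * V) := by
    rw [Submodule.le_div_iff_mul_le]
    calc (1 / U) * (1 / V) * (U * V) = (U * (1 / U)) * (V * (1 / V)) := by ring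
    _ = 1 * 1 := by rw [hU, hV]
    _ ≤ 1 := by rw [one_mul]
  calc (1 : Submodule R K) = (U * (1 / U)) * (V * (1 / V)) := by rw [hU, hV, one_mul]
  _ = (U * V) * ((1 / U) * (1 / V)) := by ring
  _ ≤ (U * V) * (1 / (U * V)) := mul_le_mul_right h1 _

lemma tri_identity (A B C : Submodule R K) :
    (A + B) * (B + C) * (C + A) = (A + B + C) * (A * B + B * C + C * A) := by
  have idem : ∀ S : Submodule R K, S + S = S := fun S => by
    rw [Submodule.add_eq_sup, sup_idem]
  have e1 : (A + B) * (B + C) * (C + A) =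
      (A * B * C + A * B * C) +
        (A * A * B + A * C * C + A * A * C + B * B * C + A * B * B + B * C * C) := by ring
  have e2 : (A + B + C) * (A * B + B * C + C * A) =
      ((A * B * C + A * B * C) + A * B * C) +
        (A * A * B + A * C * C + A * A * C + B * B * C + A * B * B + B * C * C) := by ring
  rw [e1, e2, idem (A * B * C), idem (A * B * C)]

end InvGen

include hG in
theorem spanFinset_inv :
    ∀ (n : ℕ) (s : Finset K), s.card = n → (∀ z ∈ s, z ≠ (0 : K)) → s.Nonempty →
      Submodule.span R (s : Set K) * (1 / Submodule.span R (s : Set K)) = 1 := by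
  classical
  intro n
  induction n using Nat.strong_induction_on with
  | _ n IH =>
    intro s hcard hnz hne
    by_cases h1 : s.card = 1
    · obtain ⟨c, rfl⟩ := Finset.card_eq_one.mp h1
      rw [Finset.coe_singleton]
      exact inv_principal c (hnz c (Finset.mem_singleton_self c))
    by_cases h2 : s.card = 2
    · obtain ⟨u, v, huv, rfl⟩ := Finset.card_eq_two.mp h2
      rw [Finset.coe_insert, Finset.coe_singleton]
      exact two_gen hG u v (fun h => hnz u (by simp) h.1)
    have hc3 : 3 ≤ s.card := by
      have h0 : s.card ≠ 0 := by
        rw [Finset.card_ne_zero]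
        exact hne
      omega
    obtain ⟨a, ha⟩ := hne
    have ha0 : a ≠ 0 := hnz a ha
    set s' := s.erase a with hs'
    have hs'card : s'.card = s.card - 1 := Finset.card_erase_of_mem ha
    have hs'ne : s'.Nonempty := by
      rw [← Finset.card_ne_zero]
      omega
    obtain ⟨b, hb⟩ := hs'ne
    have hb0 : b ≠ 0 := hnz b (Finset.mem_of_mem_erase hb)
    have hba : b ≠ a := Finset.ne_of_mem_erase hb
    set s'' := s'.erase b with hs''
    have hs''card : s''.card = s.card - 2 := by
      rw [hs'', Finset.card_erase_of_mem hb, hs'card]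
      omega
    have hs''ne : s''.Nonempty := by
      rw [← Finset.card_ne_zero]
      omega
    have has'' : a ∉ s'' := fun h =>
      (Finset.notMem_erase a s) (Finset.mem_of_mem_erase h)
    have hbs'' : b ∉ s'' := Finset.notMem_erase b s'
    have hins : s = insert a (insert b s'') := by
      rw [hs'', Finset.insert_erase hb, hs', Finset.insert_erase ha]
    set A := Submodule.span R ({a} : Set K) with hA
    set B := Submodule.span R ({b} : Set K) with hB
    set Cc := Submodule.span R (s'' : Set K) with hC
    have hspan : Submodule.span R (s : Set K) = A + B + Cc := by
      rw [hins, Finset.coe_insert, Finset.coe_insert, Set.insert_eq, Set.insert_eq,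
        Submodule.span_union, Submodule.span_union, ← Submodule.add_eq_sup,
        ← Submodule.add_eq_sup, add_assoc]
    have hAB : (A + B) * (1 / (A + B)) = 1 := by
      have : A + B = Submodule.span R ({a, b} : Set K) := by
        rw [show ({a, b} : Set K) = {a} ∪ {b} from rfl, Submodule.span_union,
          Submodule.add_eq_sup]
      rw [this]
      exact two_gen hG a b (fun h => ha0 h.1)
    have hBC : (B + Cc) * (1 / (B + Cc)) = 1 := by
      have he : B + Cc = Submodule.span R ((insert b s'' : Finset K) : Set K) := by
        rw [Finset.coe_insert, Set.insert_eq, Submodule.span_union, Submodule.add_eq_sup]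
      rw [he]
      refine IH (insert b s'').card ?_ _ rfl ?_ ⟨b, Finset.mem_insert_self b s''⟩
      · rw [Finset.card_insert_of_notMem hbs'']
        omega
      · intro z hz
        rcases Finset.mem_insert.mp hz with rfl | hz
        · exact hb0
        · exact hnz z (Finset.mem_of_mem_erase (Finset.mem_of_mem_erase hz))
    have hCA : (Cc + A) * (1 / (Cc + A)) = 1 := by
      have he : Cc + A = Submodule.span R ((insert a s'' : Finset K) : Set K) := by
        rw [Finset.coe_insert, Set.insert_eq, Submodule.span_union, ← Submodule.add_eq_sup,
          add_comm]
      rw [he]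
      refine IH (insert a s'').card ?_ _ rfl ?_ ⟨a, Finset.mem_insert_self a s''⟩
      · rw [Finset.card_insert_of_notMem has'']
        omega
      · intro z hz
        rcases Finset.mem_insert.mp hz with rfl | hz
        · exact ha0
        · exact hnz z (Finset.mem_of_mem_erase (Finset.mem_of_mem_erase hz))
    have hprod := inv_mul_inv _ _ (inv_mul_inv _ _ hAB hBC) hCA
    rw [tri_identity A B Cc] at hprod
    have := inv_factor (A + B + Cc) _ hprod
    rw [hspan]
    exact this

end Gauss

def auxVUnit {K : Type*} [Field K] (V : K → Prop) (z : K) : Prop := ∃ w, V w ∧ z * w = 1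

theorem val_content_key {K : Type*} [Field K] (V : K → Prop)
    (h0 : V 0) (h1 : V 1) (hneg : ∀ u, V u → V (-u))
    (hadd : ∀ u v, V u → V v → V (u + v)) (hmul : ∀ u v, V u → V v → V (u * v))
    (hcomp : ∀ u v : K, ∃ w, V w ∧ (u * w = v ∨ v * w = u))
    (f g : K[X]) (hf : f ≠ 0) (hg : g ≠ 0) :
    ∃ k : ℕ, ∀ i j : ℕ, ∃ e, V e ∧ f.coeff i * g.coeff j = (f * g).coeff k * e := by
  classical
  have hmax : ∀ q : K[X], q ≠ 0 →
      ∃ i₀, q.coeff i₀ ≠ 0 ∧ ∀ i, ∃ w, V w ∧ q.coeff i = q.coeff i₀ * w := by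
    intro q hq
    have hsel : ∀ t : Finset ℕ, t.Nonempty →
        ∃ i₀ ∈ t, ∀ i ∈ t, ∃ w, V w ∧ q.coeff i = q.coeff i₀ * w := by
      intro t
      induction t using Finset.induction_on with
      | empty => rintro ⟨i, hi⟩; exact absurd hi (Finset.notMem_empty i)
      | @insert j t hj IH =>
        intro _
        by_cases hte : t.Nonempty
        · obtain ⟨i₀, hi₀t, hdom⟩ := IH hte
          obtain ⟨w, hw, hcase⟩ := hcomp (q.coeff i₀) (q.coeff j)
          rcases hcase with hc | hc
          · refine ⟨i₀, Finset.mem_insert_of_mem hi₀t, ?_⟩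
            intro i hi
            rcases Finset.mem_insert.mp hi with rfl | hi
            · exact ⟨w, hw, hc.symm⟩
            · exact hdom i hi
          · refine ⟨j, Finset.mem_insert_self j t, ?_⟩
            intro i hi
            rcases Finset.mem_insert.mp hi with rfl | hi
            · exact ⟨1, h1, (mul_one _).symm⟩
            · obtain ⟨w', hw', he⟩ := hdom i hi
              exact ⟨w * w', hmul _ _ hw hw', by rw [he, ← hc]; ring⟩
        · have ht0 : t = ∅ := Finset.not_nonempty_iff_eq_empty.mp hte
          subst ht0
          refine ⟨j, Finset.mem_insert_self j ∅, ?_⟩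
          intro i hi
          rcases Finset.mem_insert.mp hi with rfl | hi
          · exact ⟨1, h1, (mul_one _).symm⟩
          · exact absurd hi (Finset.notMem_empty i)
    obtain ⟨i₀, hi₀, hdom⟩ := hsel q.support (Polynomial.support_nonempty.mpr hq)
    refine ⟨i₀, Polynomial.mem_support_iff.mp hi₀, fun i => ?_⟩
    by_cases hi : i ∈ q.support
    · exact hdom i hi
    · exact ⟨0, h0, by rw [Polynomial.notMem_support_iff.mp hi, mul_zero]⟩
  obtain ⟨i₀, ha0, hfd⟩ := hmax f hf
  obtain ⟨j₀, hb0, hgd⟩ := hmax g hg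
  set a := f.coeff i₀ with hadef
  set b := g.coeff j₀ with hbdef
  choose w hwV hwEq using hfd
  choose v hvV hvEq using hgd
  have hwi₀ : w i₀ = 1 :=
    (mul_left_cancel₀ ha0 (by rw [mul_one]; exact hwEq i₀)).symm
  have hvj₀ : v j₀ = 1 :=
    (mul_left_cancel₀ hb0 (by rw [mul_one]; exact hvEq j₀)).symm
  have hexw : ∃ i, auxVUnit V (w i) := ⟨i₀, 1, h1, by rw [hwi₀, one_mul]⟩
  have hexv : ∃ j, auxVUnit V (v j) := ⟨j₀, 1, h1, by rw [hvj₀, one_mul]⟩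
  set i₁ := Nat.find hexw with hi₁def
  set j₁ := Nat.find hexv with hj₁def
  have hu₁ : auxVUnit V (w i₁) := Nat.find_spec hexw
  have hu₂ : auxVUnit V (v j₁) := Nat.find_spec hexv
  have hminw : ∀ i, i < i₁ → ¬ auxVUnit V (w i) := fun i hi => Nat.find_min hexw hi
  have hminv : ∀ j, j < j₁ → ¬ auxVUnit V (v j) := fun j hj => Nat.find_min hexv hj
  have nu_mul : ∀ z c : K, V c → ¬ auxVUnit V z → ¬ auxVUnit V (z * c) := by
    rintro z c hc hz ⟨d, hd, hzcd⟩
    exact hz ⟨c * d, hmul _ _ hc hd, by rw [← mul_assoc]; exact hzcd⟩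
  have nu_add : ∀ z z' : K, V z → V z' → ¬ auxVUnit V z → ¬ auxVUnit V z' →
      ¬ auxVUnit V (z + z') := by
    rintro z z' hzV hz'V hz hz' ⟨d, hd, hzd⟩
    obtain ⟨c, hc, hcase⟩ := hcomp z z'
    rcases hcase with h | h
    · refine hz ⟨(1 + c) * d, hmul _ _ (hadd _ _ h1 hc) hd, ?_⟩
      have e : z * ((1 + c) * d) = (z + z') * d := by rw [← h]; ring
      rw [e]; exact hzd
    · refine hz' ⟨(1 + c) * d, hmul _ _ (hadd _ _ h1 hc) hd, ?_⟩
      have e : z' * ((1 + c) * d) = (z + z') * d := by rw [← h]; ring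
      rw [e]; exact hzd
  set N := i₁ + j₁ with hNdef
  set T : K := ∑ p ∈ Finset.HasAntidiagonal.antidiagonal N, w p.1 * v p.2 with hTdef
  have hfgN : (f * g).coeff N = (a * b) * T := by
    rw [Polynomial.coeff_mul, hTdef, Finset.mul_sum]
    apply Finset.sum_congr rfl
    intro p _
    rw [hwEq p.1, hvEq p.2]; ring
  set S' : K := ∑ p ∈ (Finset.HasAntidiagonal.antidiagonal N).erase (i₁, j₁), w p.1 * v p.2 with hS'def
  have hmemN : ((i₁, j₁) : ℕ × ℕ) ∈ Finset.HasAntidiagonal.antidiagonal N :=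
    Finset.HasAntidiagonal.mem_antidiagonal.mpr rfl
  have hT : T = w i₁ * v j₁ + S' := by
    rw [hTdef, hS'def]
    exact (Finset.add_sum_erase _ _ hmemN).symm
  have hS' : V S' ∧ ¬ auxVUnit V S' := by
    rw [hS'def]
    apply Finset.sum_induction _ (fun z => V z ∧ ¬ auxVUnit V z)
    · rintro x y ⟨hx1, hx2⟩ ⟨hy1, hy2⟩
      exact ⟨hadd _ _ hx1 hy1, nu_add _ _ hx1 hy1 hx2 hy2⟩
    · exact ⟨h0, fun ⟨d, _, hd⟩ => by simp at hd⟩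
    · rintro ⟨i, j⟩ hp
      have hij : i + j = N := Finset.HasAntidiagonal.mem_antidiagonal.mp (Finset.mem_of_mem_erase hp)
      have hne : (i, j) ≠ (i₁, j₁) := Finset.ne_of_mem_erase hp
      have hlt : i < i₁ ∨ j < j₁ := by
        by_contra hcon
        push_neg at hcon
        have : i = i₁ ∧ j = j₁ := by omega
        exact hne (Prod.ext this.1 this.2)
      rcases hlt with hlt | hlt
      · exact ⟨hmul _ _ (hwV i) (hvV j), nu_mul _ _ (hvV j) (hminw i hlt)⟩
      · refine ⟨hmul _ _ (hwV i) (hvV j), ?_⟩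
        have e : w i * v j = v j * w i := by ring
        rw [e]
        exact nu_mul _ _ (hwV i) (hminv j hlt)
  have hTunit : auxVUnit V T := by
    by_contra hTu
    have hVT : V T := by
      rw [hT]
      exact hadd _ _ (hmul _ _ (hwV i₁) (hvV j₁)) hS'.1
    have hnegS : ¬ auxVUnit V (-S') := by
      rintro ⟨d, hd, hdm⟩
      refine hS'.2 ⟨-d, hneg _ hd, ?_⟩
      have : S' * -d = -S' * d := by ring
      rw [this]; exact hdm
    have hcontra := nu_add _ _ hVT (hneg _ hS'.1) hTu hnegS
    apply hcontra
    have he : T + -S' = w i₁ * v j₁ := by rw [hT]; ring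
    rw [he]
    obtain ⟨c, hc, hcm⟩ := hu₁
    obtain ⟨d, hd, hdm⟩ := hu₂
    refine ⟨c * d, hmul _ _ hc hd, ?_⟩
    rw [show w i₁ * v j₁ * (c * d) = (w i₁ * c) * (v j₁ * d) from by ring, hcm, hdm, one_mul]
  obtain ⟨c, hc, hTc⟩ := hTunit
  refine ⟨N, fun i j => ⟨c * (w i * v j), hmul _ _ hc (hmul _ _ (hwV i) (hvV j)), ?_⟩⟩
  rw [hfgN]
  have e : a * b * T * (c * (w i * v j)) = a * b * (w i * v j) * (T * c) := by ring
  rw [e, hTc, mul_one, hwEq i, hvEq j]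
  ring


section PartOne
variable {D K : Type*} [CommRing D] [IsDomain D] [Field K] [Algebra D K] [IsFractionRing D K]

lemma content_mul_le (f g : K[X]) :
    polyContent D K (f * g) ≤ polyContent D K f * polyContent D K g := by
  rw [polyContent, Submodule.span_le]
  rintro z ⟨n, rfl⟩
  rw [Polynomial.coeff_mul]
  exact Submodule.sum_mem _ fun p _ =>
    Submodule.mul_mem_mul (Submodule.subset_span ⟨p.1, rfl⟩) (Submodule.subset_span ⟨p.2, rfl⟩)

/-- `primeLocSet` as a submodule. -/
def primeLocSubmodule (P : Ideal D) (hP : P.IsPrime) (E : Submodule D K) :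
    Submodule D K where
  carrier := primeLocSet D K P E
  zero_mem' := ⟨1, fun h => hP.ne_top (Ideal.eq_top_of_isUnit_mem _ h isUnit_one),
    by rw [smul_zero]; exact zero_mem E⟩
  add_mem' := by
    rintro z w ⟨s, hs, hsz⟩ ⟨t, ht, htw⟩
    refine ⟨s * t, fun h => ((hP.mem_or_mem h).elim hs ht), ?_⟩
    rw [smul_add]
    refine add_mem ?_ ?_
    · rw [mul_comm, mul_smul]
      exact E.smul_mem t hsz
    · rw [mul_smul]
      exact E.smul_mem s htw
  smul_mem' := by
    rintro d z ⟨s, hs, hsz⟩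
    exact ⟨s, hs, by rw [smul_comm]; exact E.smul_mem d hsz⟩

lemma primeLoc_content (P : Ideal D) (hP : P.IsPrime)
    (hval' : ∀ a b : @Localization.AtPrime D _ P hP, ∃ c, a * c = b ∨ b * c = a)
    (f g : K[X]) (hf : f ≠ 0) (hg : g ≠ 0) :
    primeLocSet D K P (polyContent D K (f * g)) =
      primeLocSet D K P (polyContent D K f * polyContent D K g) := by
  haveI := hP
  set α := algebraMap D K with hα
  have hinj : Function.Injective α := IsFractionRing.injective D K
  have h1P : (1 : D) ∉ P := fun h => hP.ne_top (Ideal.eq_top_of_isUnit_mem _ h isUnit_one)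
  set V : K → Prop := fun z => ∃ a s : D, s ∉ P ∧ α s * z = α a with hV
  have h0 : V 0 := ⟨0, 1, h1P, by simp⟩
  have h1 : V 1 := ⟨1, 1, h1P, by simp⟩
  have hneg : ∀ u, V u → V (-u) := by
    rintro u ⟨a, s, hs, h⟩
    exact ⟨-a, s, hs, by rw [map_neg, ← h]; ring⟩
  have hadd : ∀ u v, V u → V v → V (u + v) := by
    rintro u v ⟨a, s, hs, hu⟩ ⟨b, t, ht, hv⟩
    refine ⟨t * a + s * b, s * t, fun h => ((hP.mem_or_mem h).elim hs ht), ?_⟩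
    rw [map_add, map_mul, map_mul, map_mul]
    linear_combination α t * hu + α s * hv
  have hmul : ∀ u v, V u → V v → V (u * v) := by
    rintro u v ⟨a, s, hs, hu⟩ ⟨b, t, ht, hv⟩
    refine ⟨a * b, s * t, fun h => ((hP.mem_or_mem h).elim hs ht), ?_⟩
    rw [map_mul, map_mul]
    linear_combination (α t * v) * hu + α a * hv
  -- the map from the localization to `K`
  have hunit : ∀ s : P.primeCompl, IsUnit (α (s : D)) := by
    rintro ⟨s, hs⟩
    refine isUnit_iff_ne_zero.mpr fun h0' => hs ?_
    have : s = 0 := hinj (by rw [h0', map_zero])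
    rw [this]
    exact P.zero_mem
  set L := @Localization.AtPrime D _ P hP with hL
  set φ : L →+* K := IsLocalization.lift hunit with hφ
  have hφspec : ∀ (d : D) (s : P.primeCompl), α d = α (s : D) * φ (IsLocalization.mk' L d s) :=
    fun d s => (IsLocalization.lift_mk'_spec _ _ _ _).mp rfl
  have hφV : ∀ c : L, V (φ c) := by
    intro c
    obtain ⟨⟨p, q⟩, hpq⟩ := IsLocalization.mk'_surjective P.primeCompl c
    exact ⟨p, q, q.2, by rw [← hpq, ← hφspec p q]⟩
  have hVcomp : ∀ u v : K, V u → V v → ∃ w, V w ∧ (u * w = v ∨ v * w = u) := by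
    rintro u v ⟨au, su, hsu, hu⟩ ⟨av, sv, hsv, hv⟩
    have hsu0 : α su ≠ 0 := fun h => hsu (by rw [show su = 0 from hinj (by rw [h, map_zero])]; exact P.zero_mem)
    have hsv0 : α sv ≠ 0 := fun h => hsv (by rw [show sv = 0 from hinj (by rw [h, map_zero])]; exact P.zero_mem)
    set ut := IsLocalization.mk' L au (⟨su, hsu⟩ : P.primeCompl) with hut
    set vt := IsLocalization.mk' L av (⟨sv, hsv⟩ : P.primeCompl) with hvt
    have huφ : u = φ ut := by
      have h1' := hφspec au ⟨su, hsu⟩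
      rw [← hut] at h1'
      apply mul_left_cancel₀ hsu0
      rw [← h1', hu]
    have hvφ : v = φ vt := by
      have h1' := hφspec av ⟨sv, hsv⟩
      rw [← hvt] at h1'
      apply mul_left_cancel₀ hsv0
      rw [← h1', hv]
    obtain ⟨c, hc⟩ := hval' ut vt
    refine ⟨φ c, hφV c, ?_⟩
    rcases hc with h | h
    · left; rw [huφ, hvφ, ← map_mul, h]
    · right; rw [huφ, hvφ, ← map_mul, h]
  have hcomp : ∀ u v : K, ∃ w, V w ∧ (u * w = v ∨ v * w = u) := by
    intro u v
    obtain ⟨cu, du, hdu, hu⟩ := IsFractionRing.div_surjective (A := D) u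
    obtain ⟨cv, dv, hdv, hv⟩ := IsFractionRing.div_surjective (A := D) v
    have hdu0 : α du ≠ 0 := fun h =>
      nonZeroDivisors.ne_zero hdu (hinj (by rw [h, map_zero]))
    have hdv0 : α dv ≠ 0 := fun h =>
      nonZeroDivisors.ne_zero hdv (hinj (by rw [h, map_zero]))
    have himg : ∀ d : D, V (α d) := fun d => ⟨d, 1, h1P, by rw [map_one, one_mul]⟩
    obtain ⟨w, hw, hcase⟩ := hVcomp (α cu * α dv) (α cv * α du)
      (hmul _ _ (himg cu) (himg dv)) (hmul _ _ (himg cv) (himg du))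
    refine ⟨w, hw, ?_⟩
    have hu' : u * α du = α cu := by rw [← hu]; exact div_mul_cancel₀ _ hdu0
    have hv' : v * α dv = α cv := by rw [← hv]; exact div_mul_cancel₀ _ hdv0
    rcases hcase with h | h
    · left
      apply mul_right_cancel₀ hdu0
      apply mul_right_cancel₀ hdv0
      calc u * w * α du * α dv = (α cu * α dv) * w := by rw [← hu']; ring
      _ = α cv * α du := h
      _ = v * α dv * α du := by rw [← hv']
      _ = v * α du * α dv := by ring
    · right
      apply mul_right_cancel₀ hdv0
      apply mul_right_cancel₀ hdu0
      calc v * w * α dv * α du = (α cv * α du) * w := by rw [← hv']; ring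
      _ = α cu * α dv := h
      _ = u * α du * α dv := by rw [← hu']
      _ = u * α dv * α du := by ring
  obtain ⟨k, hk⟩ := val_content_key V h0 h1 hneg hadd hmul hcomp f g hf hg
  apply le_antisymm
  · rintro z ⟨s, hs, hsz⟩
    exact ⟨s, hs, content_mul_le f g hsz⟩
  · rintro z ⟨s, hs, hsz⟩
    have hQ : polyContent D K f * polyContent D K g ≤
        primeLocSubmodule P hP (polyContent D K (f * g)) := by
      rw [Submodule.mul_le]
      intro m hm n hn
      refine Submodule.span_induction ?_ ?_ ?_ ?_ hm
      · rintro mz ⟨i, rfl⟩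
        refine Submodule.span_induction ?_ ?_ ?_ ?_ hn
        · rintro nz ⟨j, rfl⟩
          obtain ⟨e, ⟨ae, se, hse, hesz⟩, heq⟩ := hk i j
          refine ⟨se, hse, ?_⟩
          have hcalc : se • (f.coeff i * g.coeff j) = ae • (f * g).coeff k := by
            rw [Algebra.smul_def, Algebra.smul_def, heq, ← hα]
            linear_combination ((f * g).coeff k) * hesz
          rw [hcalc]
          exact Submodule.smul_mem _ ae (Submodule.subset_span ⟨k, rfl⟩)
        · rw [mul_zero]; exact zero_mem _
        · intro z1 z2 _ _ h1' h2'
          rw [mul_add]; exact add_mem h1' h2'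
        · intro d z1 _ h1'
          rw [mul_smul_comm]
          exact Submodule.smul_mem _ d h1'
      · rw [zero_mul]; exact zero_mem _
      · intro z1 z2 _ _ h1' h2'
        rw [add_mul]; exact add_mem h1' h2'
      · intro d z1 _ h1'
        rw [smul_mul_assoc]
        exact Submodule.smul_mem _ d h1'
    obtain ⟨t, ht, hts⟩ := hQ hsz
    exact ⟨t * s, fun h => ((hP.mem_or_mem h).elim ht hs), by rw [mul_smul]; exact hts⟩

end PartOne

section PartTwo
variable {D K : Type*} [CommRing D] [IsDomain D] [Field K] [Algebra D K] [IsFractionRing D K]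

lemma elem_mono (x : D) (E : Submodule D K) {k : ℕ} (m : ℕ) {z : K} (h : x ^ k • z ∈ E) :
    x ^ (k + m) • z ∈ E := by
  rw [pow_add, mul_comm, mul_smul]
  exact E.smul_mem _ h

lemma elem_add_mem (x : D) (E : Submodule D K) {z w : K} (hz : ∃ k, x ^ k • z ∈ E)
    (hw : ∃ l, x ^ l • w ∈ E) : ∃ m, x ^ m • (z + w) ∈ E := by
  obtain ⟨k, hk⟩ := hz
  obtain ⟨l, hl⟩ := hw
  refine ⟨k + l, ?_⟩
  rw [smul_add]
  refine add_mem (elem_mono x E l hk) ?_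
  rw [add_comm k l]
  exact elem_mono x E k hl

lemma exists_uniform_pow {ι : Type*} (x : D) (E : Submodule D K) (t : Finset ι) (F : ι → K)
    (h : ∀ i ∈ t, ∃ k, x ^ k • F i ∈ E) : ∃ k, ∀ i ∈ t, x ^ k • F i ∈ E := by
  classical
  induction t using Finset.induction_on with
  | empty => exact ⟨0, fun i hi => absurd hi (Finset.notMem_empty i)⟩
  | @insert j t hj IH =>
    obtain ⟨k1, hk1⟩ := IH (fun i hi => h i (Finset.mem_insert_of_mem hi))
    obtain ⟨k2, hk2⟩ := h j (Finset.mem_insert_self j t)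
    refine ⟨k2 + k1, fun i hi => ?_⟩
    rcases Finset.mem_insert.mp hi with rfl | hi
    · exact elem_mono x E k1 hk2
    · rw [add_comm k2 k1]
      exact elem_mono x E k2 (hk1 i hi)

/-- `D_x`, i.e. `elemLocSet x 1`, as a subalgebra of `K`. -/
def elemSubalg (x : D) : Subalgebra D K where
  carrier := elemLocSet D K x (1 : Submodule D K)
  zero_mem' := ⟨0, by rw [smul_zero]; exact zero_mem _⟩
  one_mem' := ⟨0, by rw [pow_zero, one_smul]; exact Submodule.one_le.mp le_rfl⟩
  add_mem' := fun hz hw => elem_add_mem x _ hz hw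
  mul_mem' := by
    rintro z w ⟨k, hk⟩ ⟨l, hl⟩
    refine ⟨k + l, ?_⟩
    have e : x ^ (k + l) • (z * w) = (x ^ k • z) * (x ^ l • w) := by
      rw [Algebra.smul_def, Algebra.smul_def, Algebra.smul_def, pow_add, map_mul]
      ring
    rw [e]
    exact one_mul_mem hk hl
  algebraMap_mem' := fun d => ⟨0, by
    rw [pow_zero, one_smul]
    exact Submodule.mem_one.mpr ⟨d, rfl⟩⟩

lemma elemSubalg_smul (x : D) (r : ↥(elemSubalg (K := K) x)) (z : K) : r • z = (r : K) * z := by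
  rw [Algebra.smul_def]
  rfl

end PartTwo

/-- **Corollary 1.11.** Let `D` be an essential domain with quotient field `K`, with set of
essential primes `Δ`.  Then `(c_D(fg))^{⋆_Δ} = (c_D(f)·c_D(g))^{⋆_Δ}` for all nonzero
`f, g ∈ K[X]`.  However, if `D` is neither a Prüfer domain nor quasilocal, then there exist
nonzero nonunits `x, y ∈ D` with `D = D_x ∩ D_y` such that, for the stable (semi)star
operation of finite type `E^⋆ := E D_x ∩ E D_y`, the `⋆`-content formula fails for some
nonzero `f, g ∈ K[X]`; in particular `D` is not a P`⋆`MD. -/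
theorem essential_domain_content_formula
    (D K : Type*) [CommRing D] [IsDomain D] [Field K] [Algebra D K] [IsFractionRing D K]
    (Δ : Set (Ideal D)) (hprime : ∀ P ∈ Δ, P.IsPrime)
    -- `D = ⋂ {D_P : P ∈ Δ}`:
    (hinter : (⋂ P ∈ Δ, primeLocSet D K P (1 : Submodule D K)) =
      ((1 : Submodule D K) : Set K))
    -- each `D_P`, `P ∈ Δ`, is a valuation domain:
    (hval : ∀ P, ∀ hP : P ∈ Δ, ∀ a b : Localization.AtPrime P (hp := hprime P hP),
      ∃ c, a * c = b ∨ b * c = a) :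
    -- the `⋆_Δ`-content formula holds:
    (∀ f g : K[X], f ≠ 0 → g ≠ 0 →
      (⋂ P ∈ Δ, primeLocSet D K P (polyContent D K (f * g))) =
        ⋂ P ∈ Δ, primeLocSet D K P (polyContent D K f * polyContent D K g)) ∧
    -- moreover, if `D` is not Prüfer and not quasilocal:
    ((¬ ∀ I : Ideal D, I ≠ ⊥ → I.FG →
        Submodule.map (Algebra.linearMap D K) I *
            ((1 : Submodule D K) / Submodule.map (Algebra.linearMap D K) I) =
          (1 : Submodule D K)) →
      (¬ ∃! M : Ideal D, M.IsMaximal) →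
      ∃ x y : D, x ≠ 0 ∧ y ≠ 0 ∧ ¬ IsUnit x ∧ ¬ IsUnit y ∧
        -- `D = D_x ∩ D_y`:
        (elemLocSet D K x (1 : Submodule D K) ∩ elemLocSet D K y (1 : Submodule D K) =
          ((1 : Submodule D K) : Set K)) ∧
        -- the `⋆`-content formula fails for `E^⋆ = E D_x ∩ E D_y`:
        (∃ f g : K[X], f ≠ 0 ∧ g ≠ 0 ∧
          elemLocSet D K x (polyContent D K (f * g)) ∩
              elemLocSet D K y (polyContent D K (f * g)) ≠
            elemLocSet D K x (polyContent D K f * polyContent D K g) ∩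
              elemLocSet D K y (polyContent D K f * polyContent D K g)) ∧
        -- in particular, `D` is not a P`⋆`MD:
        ∃ F : Ideal D, F ≠ ⊥ ∧ F.FG ∧
          elemLocSet D K x (Submodule.map (Algebra.linearMap D K) F *
              ((1 : Submodule D K) / Submodule.map (Algebra.linearMap D K) F)) ∩
            elemLocSet D K y (Submodule.map (Algebra.linearMap D K) F *
              ((1 : Submodule D K) / Submodule.map (Algebra.linearMap D K) F)) ≠
            ((1 : Submodule D K) : Set K)) := by
  constructor
  · intro f g hf hg
    exact Set.iInter₂_congr fun P hP =>
      primeLoc_content P (hprime P hP) (hval P hP) f g hf hg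
  · intro hNP hNQ
    classical
    push_neg at hNP
    obtain ⟨I, hI0, hIfg, hInot⟩ := hNP
    set lin := Algebra.linearMap D K with hlin
    set mapI := Submodule.map lin I with hmapI
    set SD := mapI * ((1 : Submodule D K) / mapI) with hSD
    have hSD1 : SD ≤ 1 := mulinv_le_one mapI
    set J : Ideal D := Submodule.comap lin SD with hJ
    have hJtop : J ≠ ⊤ := by
      intro h
      apply hInot
      refine le_antisymm hSD1 ?_
      refine Submodule.one_le.mpr ?_
      have h1 : (1 : D) ∈ J := h ▸ Submodule.mem_top
      have h2 := Submodule.mem_comap.mp h1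
      simpa [hlin] using h2
    obtain ⟨M, hM, hJM⟩ := Ideal.exists_le_maximal J hJtop
    have hexN : ∃ N : Ideal D, N.IsMaximal ∧ N ≠ M := by
      by_contra h
      push_neg at h
      exact hNQ ⟨M, hM, fun N hN => h N hN⟩
    obtain ⟨N, hNmax, hNM⟩ := hexN
    have hsup : M ⊔ N = ⊤ :=
      Ideal.IsMaximal.coprime_of_ne hM hNmax fun h => hNM h.symm
    have h1MN : (1 : D) ∈ M ⊔ N := hsup ▸ Submodule.mem_top
    obtain ⟨y, hy, x, hx, hxy⟩ := Submodule.mem_sup.mp h1MN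
    have hMne : (1 : D) ∉ M := fun h => hM.ne_top (Ideal.eq_top_of_isUnit_mem _ h isUnit_one)
    have hNne : (1 : D) ∉ N := fun h => hNmax.ne_top (Ideal.eq_top_of_isUnit_mem _ h isUnit_one)
    have hx0 : x ≠ 0 := by
      rintro rfl
      rw [add_zero] at hxy
      exact hMne (hxy ▸ hy)
    have hy0 : y ≠ 0 := by
      rintro rfl
      rw [zero_add] at hxy
      exact hNne (hxy ▸ hx)
    have hxu : ¬ IsUnit x := fun h => hNmax.ne_top (Ideal.eq_top_of_isUnit_mem _ hx h)
    have hyu : ¬ IsUnit y := fun h => hM.ne_top (Ideal.eq_top_of_isUnit_mem _ hy h)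
    have hxM : x ∉ M := fun h => hMne (hxy ▸ add_mem hy h)
    have hxpow : ∀ k : ℕ, algebraMap D K (x ^ k) ∉ SD := by
      intro k hk
      have hJk : x ^ k ∈ J := by
        rw [hJ]
        exact Submodule.mem_comap.mpr hk
      exact hxM (hM.isPrime.mem_of_pow_mem k (hJM hJk))
    have hcopxy : IsCoprime x y := ⟨1, 1, by rw [one_mul, one_mul, add_comm]; exact hxy⟩
    -- D = D_x ∩ D_y
    have hDxy : elemLocSet D K x (1 : Submodule D K) ∩ elemLocSet D K y (1 : Submodule D K) =
        ((1 : Submodule D K) : Set K) := by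
      ext z
      constructor
      · rintro ⟨⟨k, hk⟩, ⟨l, hl⟩⟩
        obtain ⟨u, v, huv⟩ := (hcopxy.pow : IsCoprime (x ^ k) (y ^ l))
        have e : z = u • (x ^ k • z) + v • (y ^ l • z) := by
          rw [smul_smul, smul_smul, ← add_smul, huv, one_smul]
        rw [SetLike.mem_coe, e]
        exact add_mem (Submodule.smul_mem _ u hk) (Submodule.smul_mem _ v hl)
      · intro hz
        exact ⟨⟨0, by rw [pow_zero, one_smul]; exact hz⟩,
          ⟨0, by rw [pow_zero, one_smul]; exact hz⟩⟩
    -- failure of the star-invertibility for I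
    have hFneq : elemLocSet D K x SD ∩ elemLocSet D K y SD ≠
        ((1 : Submodule D K) : Set K) := by
      intro heq
      have h1 : (1 : K) ∈ elemLocSet D K x SD ∩ elemLocSet D K y SD := by
        rw [heq]
        exact Submodule.one_le.mp le_rfl
      obtain ⟨⟨k, hk⟩, -⟩ := h1
      refine hxpow k ?_
      rw [Algebra.smul_def, mul_one] at hk
      exact hk
    -- failure of the content formula
    have hfail : ∃ f g : K[X], f ≠ 0 ∧ g ≠ 0 ∧
        elemLocSet D K x (polyContent D K (f * g)) ∩
            elemLocSet D K y (polyContent D K (f * g)) ≠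
          elemLocSet D K x (polyContent D K f * polyContent D K g) ∩
            elemLocSet D K y (polyContent D K f * polyContent D K g) := by
      by_contra hcon
      push_neg at hcon
      set R := elemSubalg (D := D) (K := K) x with hR
      have hαx0 : algebraMap D K x ≠ 0 := fun h =>
        hx0 (IsFractionRing.injective D K (by rw [h, map_zero]))
      have himgR : ∀ k : ℕ, ((algebraMap D K x)⁻¹ ^ k) ∈ R := by
        intro k
        refine ⟨k, ?_⟩
        have e : x ^ k • ((algebraMap D K x)⁻¹ ^ k) = 1 := by
          rw [Algebra.smul_def, map_pow, ← mul_pow, mul_inv_cancel₀ hαx0, one_pow]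
        rw [e]
        exact Submodule.one_le.mp le_rfl
      have hDtoR : ∀ (T : Set K) (z : K), z ∈ Submodule.span D T →
          z ∈ Submodule.span (↥R) T := by
        intro T z hz
        refine Submodule.span_induction ?_ ?_ ?_ ?_ hz
        · exact fun w hw => Submodule.subset_span hw
        · exact zero_mem _
        · intro a b _ _ h1 h2
          exact add_mem h1 h2
        · intro d m _ h1
          have e : d • m = (⟨algebraMap D K d, R.algebraMap_mem d⟩ : ↥R) • m := by
            rw [elemSubalg_smul, Algebra.smul_def]
          rw [e]
          exact Submodule.smul_mem _ _ h1
      have hxsmulR : ∀ (f : K[X]) (z : K) (k : ℕ),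
          x ^ k • z ∈ polyContent D K f → z ∈ polyContent (↥R) K f := by
        intro f z k hk
        have e : z = (⟨(algebraMap D K x)⁻¹ ^ k, himgR k⟩ : ↥R) • (x ^ k • z) := by
          rw [elemSubalg_smul, Algebra.smul_def, map_pow]
          rw [← mul_assoc, ← mul_pow, inv_mul_cancel₀ hαx0, one_pow, one_mul]
        rw [e]
        exact Submodule.smul_mem _ _ (hDtoR _ _ hk)
      have hGR : ∀ f g : K[X], f ≠ 0 → g ≠ 0 →
          polyContent (↥R) K f * polyContent (↥R) K g ≤ polyContent (↥R) K (f * g) := by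
        intro f g hf hg
        rw [Submodule.mul_le]
        intro m hm n hn
        refine Submodule.span_induction ?_ ?_ ?_ ?_ hm
        · rintro mz ⟨i, rfl⟩
          refine Submodule.span_induction ?_ ?_ ?_ ?_ hn
          · rintro nz ⟨j, rfl⟩
            have hmem : f.coeff i * g.coeff j ∈
                (polyContent D K f * polyContent D K g : Submodule D K) :=
              Submodule.mul_mem_mul (Submodule.subset_span ⟨i, rfl⟩)
                (Submodule.subset_span ⟨j, rfl⟩)
            have hmem2 : f.coeff i * g.coeff j ∈
                elemLocSet D K x (polyContent D K (f * g)) := by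
              have h3 : f.coeff i * g.coeff j ∈
                  elemLocSet D K x (polyContent D K f * polyContent D K g) ∩
                    elemLocSet D K y (polyContent D K f * polyContent D K g) :=
                ⟨⟨0, by rw [pow_zero, one_smul]; exact hmem⟩,
                  ⟨0, by rw [pow_zero, one_smul]; exact hmem⟩⟩
              rw [← hcon f g hf hg] at h3
              exact h3.1
            obtain ⟨k, hk⟩ := hmem2
            exact hxsmulR _ _ k hk
          · rw [mul_zero]; exact zero_mem _
          · intro z1 z2 _ _ h1 h2
            rw [mul_add]; exact add_mem h1 h2
          · intro r z1 _ h1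
            rw [mul_smul_comm]
            exact Submodule.smul_mem _ r h1
        · rw [zero_mul]; exact zero_mem _
        · intro z1 z2 _ _ h1 h2
          rw [add_mul]; exact add_mem h1 h2
        · intro r z1 _ h1
          rw [smul_mul_assoc]
          exact Submodule.smul_mem _ r h1
      -- now apply the Gauss ⇒ invertibility theorem over R
      obtain ⟨s, hsI⟩ := hIfg
      set sK : Finset K := s.image (algebraMap D K) with hsK
      set sK' : Finset K := sK.filter (· ≠ (0 : K)) with hsK'
      have hspan_eq : Submodule.span (↥R) (sK' : Set K) = Submodule.span (↥R) (sK : Set K) := by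
        apply le_antisymm
        · exact Submodule.span_mono (by intro z hz; exact (Finset.mem_filter.mp hz).1)
        · rw [Submodule.span_le]
          intro z hz
          by_cases hz0 : z = 0
          · rw [hz0]; exact zero_mem _
          · exact Submodule.subset_span (Finset.mem_coe.mpr
              (Finset.mem_filter.mpr ⟨Finset.mem_coe.mp hz, hz0⟩))
      have hdex : ∃ d ∈ s, d ≠ (0 : D) := by
        by_contra hall
        push_neg at hall
        apply hI0
        rw [← hsI]
        apply le_antisymm _ bot_le
        rw [Ideal.span_le]
        intro d hd
        rw [hall d hd]
        exact zero_mem _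
      obtain ⟨d0, hd0s, hd00⟩ := hdex
      have hαd0 : algebraMap D K d0 ≠ 0 := fun h =>
        hd00 (IsFractionRing.injective D K (by rw [h, map_zero]))
      have hsK'ne : sK'.Nonempty :=
        ⟨algebraMap D K d0, Finset.mem_filter.mpr
          ⟨Finset.mem_image_of_mem _ hd0s, hαd0⟩⟩
      have hWinv := spanFinset_inv hGR sK'.card sK' rfl
        (fun z hz => (Finset.mem_filter.mp hz).2) hsK'ne
      rw [hspan_eq] at hWinv
      set W := Submodule.span (↥R) (sK : Set K) with hW
      have h1W : (1 : K) ∈ W * ((1 : Submodule (↥R) K) / W) := by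
        rw [hWinv]
        exact Submodule.one_le.mp le_rfl
      have hmapIspan : mapI = Submodule.span D ((algebraMap D K) '' (s : Set D)) := by
        rw [hmapI, ← hsI, ← Ideal.submodule_span_eq, Submodule.map_span]
        rfl
      have hPred : ∃ Nn : ℕ, x ^ Nn • (1 : K) ∈ SD := by
        refine Submodule.mul_induction_on h1W ?_ ?_
        · intro m hm n hn
          have hL1 : ∃ k, x ^ k • m ∈ mapI := by
            refine Submodule.span_induction ?_ ?_ ?_ ?_ hm
            · intro zz hzz
              obtain ⟨d, hd, rfl⟩ := Finset.mem_image.mp (Finset.mem_coe.mp hzz)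
              refine ⟨0, ?_⟩
              rw [pow_zero, one_smul]
              exact Submodule.mem_map_of_mem (by rw [← hsI]; exact Ideal.subset_span hd)
            · exact ⟨0, by rw [smul_zero]; exact zero_mem _⟩
            · intro z1 z2 _ _ h1 h2
              exact elem_add_mem x _ h1 h2
            · rintro r z1 _ ⟨k1, h1⟩
              obtain ⟨kr, hkr⟩ := r.2
              obtain ⟨dr, hdr⟩ := Submodule.mem_one.mp hkr
              refine ⟨kr + k1, ?_⟩
              have e : x ^ (kr + k1) • (r • z1) = dr • (x ^ k1 • z1) := by
                rw [elemSubalg_smul, Algebra.smul_def, Algebra.smul_def, Algebra.smul_def,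
                  pow_add, map_mul]
                have hdr' : algebraMap D K dr = algebraMap D K (x ^ kr) * (r : K) := by
                  rw [hdr, Algebra.smul_def]
                rw [hdr']
                ring
              rw [e]
              exact Submodule.smul_mem _ dr h1
          have hL2 : ∃ k, x ^ k • n ∈ ((1 : Submodule D K) / mapI) := by
            have hstep : ∀ d ∈ s, ∃ k, x ^ k • (n * algebraMap D K d) ∈
                (1 : Submodule D K) := by
              intro d hd
              have h2 : n * algebraMap D K d ∈ (1 : Submodule (↥R) K) :=
                Submodule.mem_div_iff_forall_mul_mem.mp hn _
                  (Submodule.subset_span (Finset.mem_coe.mpr (Finset.mem_image_of_mem _ hd)))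
              obtain ⟨rr, hrr⟩ := Submodule.mem_one.mp h2
              obtain ⟨k, hk⟩ := rr.2
              refine ⟨k, ?_⟩
              have e : (rr : K) = n * algebraMap D K d := hrr
              rw [← e]
              exact hk
            obtain ⟨k, hk⟩ := exists_uniform_pow x 1 s (fun d => n * algebraMap D K d) hstep
            refine ⟨k, ?_⟩
            rw [Submodule.mem_div_iff_forall_mul_mem]
            intro w hw
            rw [hmapIspan] at hw
            refine Submodule.span_induction ?_ ?_ ?_ ?_ hw
            · rintro ww ⟨d, hd, rfl⟩
              have e : (x ^ k • n) * algebraMap D K d = x ^ k • (n * algebraMap D K d) := by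
                rw [smul_mul_assoc]
              rw [e]
              exact hk d hd
            · rw [mul_zero]; exact zero_mem _
            · intro z1 z2 _ _ h1 h2
              rw [mul_add]; exact add_mem h1 h2
            · intro dd z1 _ h1
              rw [mul_smul_comm]
              exact Submodule.smul_mem _ dd h1
          obtain ⟨k1, hk1⟩ := hL1
          obtain ⟨k2, hk2⟩ := hL2
          refine ⟨k1 + k2, ?_⟩
          have e : x ^ (k1 + k2) • (m * n) = (x ^ k1 • m) * (x ^ k2 • n) := by
            rw [Algebra.smul_def, Algebra.smul_def, Algebra.smul_def, pow_add, map_mul]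
            ring
          rw [e]
          exact Submodule.mul_mem_mul hk1 hk2
        · intro z1 z2 h1 h2
          exact elem_add_mem x _ h1 h2
      obtain ⟨Nn, hNn⟩ := hPred
      refine hxpow Nn ?_
      rw [Algebra.smul_def, mul_one] at hNn
      exact hNn
    exact ⟨x, y, hx0, hy0, hxu, hyu, hDxy, hfail, I, hI0, hIfg, hFneq⟩
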